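/- Let n, t, m be positive natural numbers, ε > 0 and δ ∈ (0, 1), set ρ = (√(log(1/δ) + ε) − √(log(1/δ)))², and let β : ℕ → Fin m be a binning function. Let U be a finite subset of Fin n (the set of users), let k ∈ U, and let U' = U.erase k (node-neighboring). For each week j : Fin t let d j : Fin n → ℕ give the ARP degree of each user in week j. Define H : Fin t → Fin m → ℝ and H' : Fin t → Fin m → ℝ by H j b = card {u ∈ U | β (d j u) = b} and H' j b = card {u ∈ U' | β (d j u) = b}. Let G be the product measure on Fin t → Fin m → ℝ whose t·m coordinates are i.i.d. Gaussian with mean 0 and variance t/(2ρ), and let P : (Fin t → Fin m → ℝ) → (Fin t → Fin m → ℝ) be any measurable function (the threshold-at-zero-then-round post-processing applied to every bin). Then the pushforward of G under y ↦ P(H + y) and the pushforward of G under y ↦ P(H' + y) are (ε, δ)-indistinguishable. (The histogram-based-δ approach satisfies (ε, δ)-node-differential privacy.) -/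

import Mathlib

open MeasureTheory ProbabilityTheory Real
open scoped ENNReal NNReal

/-- Measures `μ` and `ν` are `(ε, δ)`-indistinguishable if for every measurable set `S`,
`μ S ≤ exp ε * ν S + δ`. -/
def Indist {X : Type*} [MeasurableSpace X] (μ ν : Measure X) (ε δ : ℝ) : Prop :=
  ∀ S : Set X, MeasurableSet S →
    μ S ≤ ENNReal.ofReal (Real.exp ε) * ν S + ENNReal.ofReal δ

/-- The weekly degree histogram: for week `j` and bin `b`, the number of users in `U`
whose degree in week `j` falls into bin `b` under the binning function `β`. -/
def degreeHistogram {n t m : ℕ} (β : ℕ → Fin m) (U : Finset (Fin n))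
    (d : Fin t → Fin n → ℕ) : Fin t → Fin m → ℝ :=
  fun j b => ((U.filter fun u => β (d j u) = b).card : ℝ)

section DPAuxLemmas

open Finset
open scoped ENNReal NNReal

private lemma lintegral_fin_pi_prod : ∀ {N : ℕ} {E : Fin N → Type} [∀ i, MeasurableSpace (E i)]
    (μ : ∀ i, Measure (E i)) [∀ i, SigmaFinite (μ i)] (f : ∀ i, E i → ℝ≥0∞),
    (∀ i, Measurable (f i)) →
    ∫⁻ x : ∀ i, E i, ∏ i, f i (x i) ∂Measure.pi μ = ∏ i, ∫⁻ x, f i x ∂μ i := by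
  intro N
  induction N with
  | zero =>
      intro E _ μ _ f hf
      simp [lintegral_const, Measure.pi_univ]
  | succ N ih =>
      intro E _ μ _ f hf
      have hmp := (measurePreserving_piFinSuccAbove μ 0).symm
      have hmeas : Measurable fun x : ∀ i, E i => ∏ i, f i (x i) :=
        Finset.measurable_prod _ fun i _ => (hf i).comp (measurable_pi_apply i)
      rw [← hmp.lintegral_comp hmeas]
      simp_rw [MeasurableEquiv.piFinSuccAbove_symm_apply, Fin.insertNthEquiv,
        Fin.prod_univ_succ, Fin.insertNth_zero, Equiv.coe_fn_mk, Fin.cons_succ, Fin.cons_zero]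
      have hc : ∀ (x : Fin N) (h : E (Fin.succAbove 0 x) = E x.succ) (w : E (Fin.succAbove 0 x)),
          cast h w = w := fun _ _ _ => rfl
      simp_rw [hc]
      rw [lintegral_prod_mul (f := f 0)
        (g := fun w : ∀ j : Fin N, E (Fin.succAbove 0 j) => ∏ i, f i.succ (w i)) (hf 0).aemeasurable
        (Finset.measurable_prod _ fun i _ =>
          (hf i.succ).comp (measurable_pi_apply i)).aemeasurable]
      rw [ih (fun i => μ (Fin.succAbove 0 i)) (fun i => f i.succ) (fun i => hf i.succ)]
      rfl

private lemma pi_withDensity_fin {N : ℕ} {E : Fin N → Type} [∀ i, MeasurableSpace (E i)]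
    (μ : ∀ i, Measure (E i)) [∀ i, SigmaFinite (μ i)] (f : ∀ i, E i → ℝ≥0∞)
    (hf : ∀ i, Measurable (f i)) [∀ i, SigmaFinite ((μ i).withDensity (f i))] :
    (Measure.pi μ).withDensity (fun x => ∏ i, f i (x i))
      = Measure.pi (fun i => (μ i).withDensity (f i)) := by
  refine (Measure.pi_eq fun s hs => ?_).symm
  rw [withDensity_apply _ (MeasurableSet.univ_pi hs),
    ← lintegral_indicator (MeasurableSet.univ_pi hs)]
  have hind : ∀ x : ∀ i, E i, (Set.pi Set.univ s).indicator (fun x => ∏ i, f i (x i)) x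
      = ∏ i, (s i).indicator (f i) (x i) := by
    intro x
    by_cases hx : x ∈ Set.pi Set.univ s
    · rw [Set.indicator_of_mem hx]
      exact Finset.prod_congr rfl fun i _ =>
        (Set.indicator_of_mem (hx i (Set.mem_univ i)) _).symm
    · rw [Set.indicator_of_notMem hx]
      rw [Set.mem_univ_pi] at hx
      push_neg at hx
      obtain ⟨i, hi⟩ := hx
      exact (Finset.prod_eq_zero (Finset.mem_univ i)
        (Set.indicator_of_notMem hi _)).symm
  simp_rw [hind]
  rw [lintegral_fin_pi_prod μ _ (fun i => (hf i).indicator (hs i))]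
  exact Finset.prod_congr rfl fun i _ => by
    rw [withDensity_apply _ (hs i), ← lintegral_indicator (hs i)]

private lemma gaussian_withDensity_shift {V : ℝ≥0} (hV : V ≠ 0) (c : ℝ) :
    (gaussianReal 0 V).withDensity
      (fun x => ENNReal.ofReal (Real.exp ((2 * c * x - c ^ 2) / (2 * V))))
      = gaussianReal c V := by
  have hVpos : (0:ℝ) < V := lt_of_le_of_ne V.coe_nonneg (by exact_mod_cast hV.symm)
  rw [gaussianReal_of_var_ne_zero _ hV, gaussianReal_of_var_ne_zero _ hV,
    ← withDensity_mul _ (measurable_gaussianPDF _ _)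
      (by fun_prop)]
  congr 1
  ext x
  simp only [Pi.mul_apply, gaussianPDF]
  rw [← ENNReal.ofReal_mul (gaussianPDFReal_nonneg _ _ _)]
  congr 1
  simp only [gaussianPDFReal, sub_zero]
  rw [mul_assoc, ← Real.exp_add]
  congr 2
  field_simp
  ring

private lemma lintegral_exp_gaussian {V : ℝ≥0} (hV : V ≠ 0) (a : ℝ) :
    ∫⁻ x, ENNReal.ofReal (Real.exp (a * x)) ∂(gaussianReal 0 V)
      = ENNReal.ofReal (Real.exp ((V : ℝ) * a ^ 2 / 2)) := by
  have hVpos : (0:ℝ) < V := lt_of_le_of_ne V.coe_nonneg (by exact_mod_cast hV.symm)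
  rw [gaussianReal_of_var_ne_zero _ hV,
    lintegral_withDensity_eq_lintegral_mul _ (measurable_gaussianPDF _ _) (by fun_prop)]
  have hpt : ∀ x : ℝ, gaussianPDF 0 V x * ENNReal.ofReal (Real.exp (a * x))
      = ENNReal.ofReal (Real.exp ((V : ℝ) * a ^ 2 / 2)) * gaussianPDF ((V : ℝ) * a) V x := by
    intro x
    simp only [gaussianPDF]
    rw [← ENNReal.ofReal_mul (gaussianPDFReal_nonneg _ _ _),
      ← ENNReal.ofReal_mul (Real.exp_nonneg _)]
    congr 1
    have key : -x ^ 2 / (2 * (V:ℝ)) + a * x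
        = -(x - (V:ℝ) * a) ^ 2 / (2 * (V:ℝ)) + (V:ℝ) * a ^ 2 / 2 := by
      field_simp
      ring
    simp only [gaussianPDFReal, sub_zero]
    rw [mul_assoc, ← Real.exp_add, key, Real.exp_add]
    ring
  simp only [Pi.mul_apply]
  simp_rw [hpt]
  rw [lintegral_const_mul _ (measurable_gaussianPDF _ _), lintegral_gaussianPDF_eq_one _ hV,
    mul_one]

end DPAuxLemmas

set_option maxHeartbeats 1600000 in
/-- The histogram-based-δ approach satisfies `(ε, δ)`-node-differential privacy: on
node-neighboring user sets (one user removed), releasing the weekly degree histograms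
perturbed by i.i.d. Gaussian noise of mean `0` and variance `t/(2ρ)` in every bin, where
`ρ = (√(log(1/δ) + ε) − √(log(1/δ)))²`, followed by any measurable post-processing `P`,
is `(ε, δ)`-indistinguishable. -/
theorem histogram_delta_approach_node_dp (n t m : ℕ) (hn : 0 < n) (ht : 0 < t) (hm : 0 < m)
    (ε δ : ℝ) (hε : 0 < ε) (hδ₀ : 0 < δ) (hδ₁ : δ < 1) (ρ : ℝ)
    (hρ : ρ = (Real.sqrt (Real.log (1 / δ) + ε) - Real.sqrt (Real.log (1 / δ))) ^ 2)
    (β : ℕ → Fin m) (U : Finset (Fin n)) (k : Fin n) (hk : k ∈ U)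
    (d : Fin t → Fin n → ℕ)
    (P : (Fin t → Fin m → ℝ) → (Fin t → Fin m → ℝ)) (hP : Measurable P) :
    Indist
      (Measure.map (fun y => P (degreeHistogram β U d + y))
        (Measure.pi fun _ : Fin t => Measure.pi fun _ : Fin m =>
          gaussianReal 0 (((t : ℝ) / (2 * ρ)).toNNReal)))
      (Measure.map (fun y => P (degreeHistogram β (U.erase k) d + y))
        (Measure.pi fun _ : Fin t => Measure.pi fun _ : Fin m =>
          gaussianReal 0 (((t : ℝ) / (2 * ρ)).toNNReal)))
      ε δ := by
  classical
  -- basic real-number facts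
  set c : ℝ := Real.log (1 / δ) with hc_def
  have hc : 0 < c := Real.log_pos (by rw [lt_div_iff₀ hδ₀]; linarith)
  set s : ℝ := Real.sqrt (c + ε) - Real.sqrt c with hs_def
  have hs : 0 < s := by
    have := Real.sqrt_lt_sqrt hc.le (by linarith : c < c + ε)
    simp only [hs_def]; linarith
  have hρs : ρ = s ^ 2 := hρ
  have hρ0 : 0 < ρ := hρs ▸ pow_pos hs 2
  have hsc : Real.sqrt c ^ 2 = c := Real.sq_sqrt hc.le
  have hscε : Real.sqrt (c + ε) ^ 2 = c + ε := Real.sq_sqrt (by linarith)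
  have hsqc : 0 < Real.sqrt c := Real.sqrt_pos.mpr hc
  have hediff : ε - ρ = 2 * Real.sqrt c * s := by
    have h2 : ε - ρ = Real.sqrt (c + ε) ^ 2 - Real.sqrt c ^ 2 - s ^ 2 := by
      rw [hscε, hsc, hρs]; ring
    rw [h2, hs_def]; ring
  have hediffpos : 0 < ε - ρ := by rw [hediff]; positivity
  have htR : (0:ℝ) < (t:ℝ) := Nat.cast_pos.mpr ht
  set V : ℝ≥0 := ((t : ℝ) / (2 * ρ)).toNNReal with hV_def
  have hVr : (V:ℝ) = (t:ℝ) / (2 * ρ) := Real.coe_toNNReal _ (by positivity)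
  have hVpos : (0:ℝ) < (V:ℝ) := by rw [hVr]; positivity
  have hV0 : V ≠ 0 := by
    intro h
    rw [h] at hVpos
    simp at hVpos
  have hclog : c = -Real.log δ := by rw [hc_def, one_div, Real.log_inv]
  set a : ℝ := (ε - ρ) / (t:ℝ) with ha_def
  have ha : 0 < a := div_pos hediffpos htR
  set T' : ℝ := (V:ℝ) * ε - (t:ℝ) / 2 with hT'_def
  have hfinal : (t:ℝ) * ((V:ℝ) * a ^ 2 / 2) = a * T' + Real.log δ := by
    have e1 : (t:ℝ) * ((V:ℝ) * a ^ 2 / 2) - a * T' = -((ε - ρ) ^ 2 / (4 * ρ)) := by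
      rw [hT'_def, ha_def, hVr]
      field_simp
      ring
    have e2 : (ε - ρ) ^ 2 = 4 * c * ρ := by
      have h4 : (2 * Real.sqrt c * s) ^ 2 = 4 * Real.sqrt c ^ 2 * s ^ 2 := by ring
      rw [hediff, hρs, h4, hsc]
    have hρne : ρ ≠ 0 := hρ0.ne'
    have e3 : -((ε - ρ) ^ 2 / (4 * ρ)) = -c := by
      rw [e2]
      field_simp
    have e4 := e1.trans (e3.trans (show -c = Real.log δ by rw [hclog]; ring))
    linarith
  -- notation for the measures and the shift
  set ν : Measure ℝ := gaussianReal 0 V with hν_def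
  set Gm : Measure (Fin t → Fin m → ℝ) :=
    Measure.pi (fun _ : Fin t => Measure.pi fun _ : Fin m => ν) with hGm_def
  set v : Fin t → Fin m → ℝ := fun j b' => if β (d j k) = b' then 1 else 0 with hv_def
  set H' : Fin t → Fin m → ℝ := degreeHistogram β (U.erase k) d with hH'_def
  have hHsum : degreeHistogram β U d = H' + v := by
    funext j b'
    simp only [degreeHistogram, hH'_def, hv_def, Pi.add_apply, Finset.filter_erase]
    by_cases hbk : β (d j k) = b'
    · have hkf : k ∈ U.filter (fun u => β (d j u) = b') := Finset.mem_filter.mpr ⟨hk, hbk⟩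
      have h1 : 1 ≤ (U.filter (fun u => β (d j u) = b')).card :=
        Finset.card_pos.mpr ⟨k, hkf⟩
      rw [if_pos hbk, Finset.card_erase_of_mem hkf, Nat.cast_sub h1]
      simp
    · rw [if_neg hbk, add_zero, Finset.erase_eq_of_notMem
        (by simp [Finset.mem_filter, hbk] : k ∉ U.filter fun u => β (d j u) = b')]
  set f : (Fin t → Fin m → ℝ) → ℝ := fun z => ∑ j, z j (β (d j k)) with hf_def
  have hfmeas : Measurable f :=
    Finset.measurable_sum _ fun j _ =>
      (measurable_pi_apply (β (d j k))).comp (measurable_pi_apply j)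
  set r : (Fin t → Fin m → ℝ) → ℝ≥0∞ :=
    fun z => ENNReal.ofReal (Real.exp ((2 * f z - t) / (2 * V))) with hr_def
  have hrmeas : Measurable r :=
    (Real.measurable_exp.comp (((hfmeas.const_mul 2).sub measurable_const).div_const
      _)).ennreal_ofReal
  have hshift : ∀ w : Fin t → Fin m → ℝ, Measurable fun y : Fin t → Fin m → ℝ => w + y :=
    fun w => measurable_pi_lambda _ fun j => measurable_pi_lambda _ fun b' =>
      measurable_const.add ((measurable_pi_apply b').comp (measurable_pi_apply j))
  have hPH' : Measurable fun y : Fin t → Fin m → ℝ => P (H' + y) := hP.comp (hshift H')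
  -- Step B1 : the shifted measure is a product of shifted gaussians
  have hmp1 : ∀ (j : Fin t) (b' : Fin m), MeasurePreserving (fun x : ℝ => v j b' + x)
      ν (gaussianReal (v j b') V) := by
    intro j b'
    refine ⟨measurable_const_add _, ?_⟩
    rw [hν_def, gaussianReal_map_const_add, zero_add]
  have hmp2 : MeasurePreserving (fun y : Fin t → Fin m → ℝ => v + y) Gm
      (Measure.pi fun j => Measure.pi fun b' => gaussianReal (v j b') V) := by
    have h := measurePreserving_pi (fun _ : Fin t => Measure.pi fun _ : Fin m => ν)
      (fun j => Measure.pi fun b' => gaussianReal (v j b') V)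
      (fun j => measurePreserving_pi _ _ (fun b' => hmp1 j b'))
    exact h
  -- Step B2 : identify the shifted product gaussian with a density against Gm
  set g : Fin t → Fin m → ℝ → ℝ≥0∞ :=
    fun j b' x => ENNReal.ofReal (Real.exp ((2 * v j b' * x - (v j b') ^ 2) / (2 * V)))
    with hg_def
  have hgmeas : ∀ j b', Measurable (g j b') := fun j b' => by
    apply Measurable.ennreal_ofReal
    fun_prop
  have hgauss : ∀ j b', ν.withDensity (g j b') = gaussianReal (v j b') V :=
    fun j b' => gaussian_withDensity_shift hV0 _
  have hsf : ∀ (j : Fin t) (b' : Fin m), SigmaFinite (ν.withDensity (g j b')) := by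
    intro j b'
    rw [hgauss j b']
    infer_instance
  have hinner : ∀ j : Fin t, Measure.pi (fun b' => gaussianReal (v j b') V)
      = (Measure.pi fun _ : Fin m => ν).withDensity (fun x => ∏ b', g j b' (x b')) := by
    intro j
    haveI := hsf j
    rw [pi_withDensity_fin _ _ (hgmeas j)]
    congr 1
    funext b'
    exact (hgauss j b').symm
  have hsfouter : ∀ j : Fin t,
      SigmaFinite ((Measure.pi fun _ : Fin m => ν).withDensity
        (fun x => ∏ b', g j b' (x b'))) := by
    intro j
    rw [← hinner j]
    infer_instance
  have houtermeas : ∀ j : Fin t, Measurable fun x : Fin m → ℝ => ∏ b', g j b' (x b') :=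
    fun j => Finset.measurable_prod _ fun b' _ =>
      (hgmeas j b').comp (measurable_pi_apply b')
  have hBprod : Measure.pi (fun j => Measure.pi fun b' => gaussianReal (v j b') V)
      = Gm.withDensity (fun z => ∏ j, ∏ b', g j b' (z j b')) := by
    haveI := hsfouter
    have hfe : (fun j : Fin t => Measure.pi fun b' => gaussianReal (v j b') V)
        = fun j : Fin t => (Measure.pi fun _ : Fin m => ν).withDensity
            (fun x => ∏ b', g j b' (x b')) := funext hinner
    rw [hfe, ← pi_withDensity_fin _ _ houtermeas]
  -- Step B3 : the product density equals `r`
  have hdens : (fun z : Fin t → Fin m → ℝ => ∏ j, ∏ b', g j b' (z j b')) = r := by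
    funext z
    have hcoord : ∀ j : Fin t, ∏ b', g j b' (z j b')
        = ENNReal.ofReal (Real.exp ((2 * z j (β (d j k)) - 1) / (2 * (V:ℝ)))) := by
      intro j
      rw [hg_def]
      rw [← ENNReal.ofReal_prod_of_nonneg (fun b' _ => Real.exp_nonneg _), ← Real.exp_sum]
      congr 2
      have hterm : ∀ b' : Fin m, (2 * v j b' * z j b' - (v j b') ^ 2) / (2 * (V:ℝ))
          = if β (d j k) = b' then (2 * z j b' - 1) / (2 * (V:ℝ)) else 0 := by
        intro b'
        by_cases h : β (d j k) = b'
        · simp [hv_def, h]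
        · simp [hv_def, h]
      rw [Finset.sum_congr rfl fun b' _ => hterm b', Finset.sum_ite_eq]
      simp
    rw [Finset.prod_congr rfl fun j _ => hcoord j, hr_def,
      ← ENNReal.ofReal_prod_of_nonneg (fun j _ => Real.exp_nonneg _), ← Real.exp_sum]
    congr 2
    rw [← Finset.sum_div]
    congr 1
    rw [Finset.sum_sub_distrib, ← Finset.mul_sum, Finset.sum_const, Finset.card_univ,
      Fintype.card_fin]
    simp [hf_def]
  have hB : Gm.map (fun y => v + y) = Gm.withDensity r := by
    rw [hmp2.map_eq, hBprod, hdens]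
  -- Step A : rewrite both pushforward measures
  intro S hS
  have hmapL : Measure.map (fun y => P (degreeHistogram β U d + y)) Gm
      = Measure.map (fun w => P (H' + w)) (Gm.map (fun y => v + y)) := by
    rw [Measure.map_map hPH' (hshift v)]
    congr 1
    funext y
    simp only [Function.comp_apply]
    rw [hHsum, add_assoc]
  set A : Set (Fin t → Fin m → ℝ) := (fun w => P (H' + w)) ⁻¹' S with hA_def
  have hA : MeasurableSet A := hPH' hS
  have hLHS : (Measure.map (fun y => P (degreeHistogram β U d + y)) Gm) S
      = (Gm.withDensity r) A := by
    rw [hmapL, Measure.map_apply hPH' hS, hB]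
  have hRHS : (Measure.map (fun y => P (H' + y)) Gm) S = Gm A := Measure.map_apply hPH' hS
  -- the good event
  set E : Set (Fin t → Fin m → ℝ) := {z | (2 * f z - t) / (2 * (V:ℝ)) ≤ ε} with hE_def
  have hfE : Measurable fun z : Fin t → Fin m → ℝ => (2 * f z - t) / (2 * (V:ℝ)) :=
    ((hfmeas.const_mul 2).sub measurable_const).div_const _
  have hE : MeasurableSet E := measurableSet_le hfE measurable_const
  have hrE : ∀ z ∈ E, r z ≤ ENNReal.ofReal (Real.exp ε) := fun z hz =>
    ENNReal.ofReal_le_ofReal (Real.exp_le_exp.mpr hz)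
  -- the bad event pulled back under the shift
  have hpre : (fun y : Fin t → Fin m → ℝ => v + y) ⁻¹' Eᶜ = {y | T' < f y} := by
    ext y
    simp only [Set.mem_preimage, Set.mem_compl_iff, hE_def, Set.mem_setOf_eq, not_le]
    have hfv : f (v + y) = t + f y := by
      simp only [hf_def, Pi.add_apply, hv_def, if_pos rfl]
      rw [Finset.sum_add_distrib, Finset.sum_const, Finset.card_univ, Fintype.card_fin]
      simp
    have h2V : (0:ℝ) < 2 * (V:ℝ) := by positivity
    have hiff : ∀ w : ℝ, (ε < (2 * ((t:ℝ) + w) - (t:ℝ)) / (2 * (V:ℝ))) ↔ T' < w := by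
      intro w
      rw [hT'_def, lt_div_iff₀ h2V]
      constructor <;> intro h <;> nlinarith
    rw [hfv]
    exact hiff (f y)
  -- Chernoff bound for the bad event
  have hexpmeas : Measurable fun y : Fin t → Fin m → ℝ =>
      ENNReal.ofReal (Real.exp (a * f y)) :=
    (Real.measurable_exp.comp (hfmeas.const_mul a)).ennreal_ofReal
  have hmgf1 : ∀ j : Fin t, ∫⁻ y : Fin m → ℝ, ENNReal.ofReal (Real.exp (a * y (β (d j k))))
      ∂(Measure.pi fun _ : Fin m => ν) = ENNReal.ofReal (Real.exp ((V:ℝ) * a ^ 2 / 2)) := by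
    intro j
    have hfuncs : ∀ y : Fin m → ℝ, ENNReal.ofReal (Real.exp (a * y (β (d j k))))
        = ∏ b', (if b' = β (d j k) then ENNReal.ofReal (Real.exp (a * y b')) else 1) := by
      intro y
      rw [Finset.prod_ite_eq' Finset.univ (β (d j k))
        (fun b' => ENNReal.ofReal (Real.exp (a * y b')))]
      simp
    simp_rw [hfuncs]
    rw [lintegral_fin_pi_prod _
      (fun b' x => if b' = β (d j k) then ENNReal.ofReal (Real.exp (a * x)) else 1)
      (fun b' => by
        by_cases h : b' = β (d j k)
        · simp only [h, if_true]
          exact (Real.measurable_exp.comp (measurable_id.const_mul a)).ennreal_ofReal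
        · simp only [h, if_false]
          exact measurable_const)]
    have hone : ∀ b' : Fin m,
        (∫⁻ x, (if b' = β (d j k) then ENNReal.ofReal (Real.exp (a * x)) else 1) ∂ν)
        = if b' = β (d j k) then ENNReal.ofReal (Real.exp ((V:ℝ) * a ^ 2 / 2)) else 1 := by
      intro b'
      by_cases h : b' = β (d j k)
      · simp only [h, if_true]
        exact lintegral_exp_gaussian hV0 a
      · simp only [h, if_false]
        rw [lintegral_one]
        exact measure_univ
    rw [Finset.prod_congr rfl fun b' _ => hone b',
      Finset.prod_ite_eq' Finset.univ (β (d j k))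
        (fun _ => ENNReal.ofReal (Real.exp ((V:ℝ) * a ^ 2 / 2)))]
    simp
  have hmgf : ∫⁻ z, ENNReal.ofReal (Real.exp (a * f z)) ∂Gm
      = ENNReal.ofReal (Real.exp ((V:ℝ) * a ^ 2 / 2)) ^ t := by
    have hsplit : ∀ z : Fin t → Fin m → ℝ, ENNReal.ofReal (Real.exp (a * f z))
        = ∏ j, ENNReal.ofReal (Real.exp (a * z j (β (d j k)))) := by
      intro z
      rw [← ENNReal.ofReal_prod_of_nonneg (fun j _ => Real.exp_nonneg _), ← Real.exp_sum,
        hf_def, Finset.mul_sum]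
    simp_rw [hsplit]
    rw [hGm_def, lintegral_fin_pi_prod _
      (fun j (y : Fin m → ℝ) => ENNReal.ofReal (Real.exp (a * y (β (d j k)))))
      (fun j => (Real.measurable_exp.comp
        (by fun_prop : Measurable fun y : Fin m → ℝ => a * y (β (d j k)))).ennreal_ofReal)]
    rw [Finset.prod_congr rfl fun j _ => hmgf1 j, Finset.prod_const, Finset.card_univ,
      Fintype.card_fin]
  set x0 : ℝ≥0∞ := ENNReal.ofReal (Real.exp (a * T')) with hx0_def
  have hx0ne : x0 ≠ 0 := (ENNReal.ofReal_pos.mpr (Real.exp_pos _)).ne'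
  have hx0top : x0 ≠ ⊤ := ENNReal.ofReal_ne_top
  have hcher : x0 * Gm {y | T' < f y} ≤ ENNReal.ofReal (Real.exp ((V:ℝ) * a ^ 2 / 2)) ^ t := by
    calc x0 * Gm {y | T' < f y}
        ≤ x0 * Gm {y | x0 ≤ ENNReal.ofReal (Real.exp (a * f y))} := by
          refine mul_le_mul_right (measure_mono fun y hy => ?_) x0
          exact ENNReal.ofReal_le_ofReal (Real.exp_le_exp.mpr
            (mul_le_mul_of_nonneg_left (le_of_lt hy) ha.le))
      _ ≤ ∫⁻ y, ENNReal.ofReal (Real.exp (a * f y)) ∂Gm :=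
          mul_meas_ge_le_lintegral₀ hexpmeas.aemeasurable x0
      _ = _ := hmgf
  have hrhs_eq : ENNReal.ofReal (Real.exp ((V:ℝ) * a ^ 2 / 2)) ^ t
      = x0 * ENNReal.ofReal δ := by
    rw [← ENNReal.ofReal_pow (Real.exp_nonneg _), ← Real.exp_nat_mul, hx0_def,
      ← ENNReal.ofReal_mul (Real.exp_nonneg _)]
    congr 1
    rw [← Real.exp_log hδ₀, ← Real.exp_add, hfinal]
  have hchern : Gm {y | T' < f y} ≤ ENNReal.ofReal δ :=
    (ENNReal.mul_le_mul_iff_right hx0ne hx0top).mp (hcher.trans_eq hrhs_eq)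
  -- combine everything
  rw [hLHS, hRHS, withDensity_apply r hA]
  have hsub : A ⊆ (A ∩ E) ∪ Eᶜ := fun x hx => by
    by_cases hxE : x ∈ E
    · exact Or.inl ⟨hx, hxE⟩
    · exact Or.inr hxE
  have h1 : ∫⁻ y in A ∩ E, r y ∂Gm ≤ ENNReal.ofReal (Real.exp ε) * Gm A := by
    calc ∫⁻ y in A ∩ E, r y ∂Gm
        ≤ ∫⁻ _ in A ∩ E, ENNReal.ofReal (Real.exp ε) ∂Gm :=
          setLIntegral_mono measurable_const fun y hy => hrE y hy.2
      _ = ENNReal.ofReal (Real.exp ε) * Gm (A ∩ E) := setLIntegral_const _ _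
      _ ≤ ENNReal.ofReal (Real.exp ε) * Gm A :=
          mul_le_mul_right (measure_mono Set.inter_subset_left) _
  have h2 : ∫⁻ y in Eᶜ, r y ∂Gm ≤ ENNReal.ofReal δ := by
    rw [← withDensity_apply r hE.compl, ← hB, Measure.map_apply (hshift v) hE.compl, hpre]
    exact hchern
  calc ∫⁻ y in A, r y ∂Gm
      ≤ ∫⁻ y in (A ∩ E) ∪ Eᶜ, r y ∂Gm := lintegral_mono_set hsub
    _ ≤ ∫⁻ y in A ∩ E, r y ∂Gm + ∫⁻ y in Eᶜ, r y ∂Gm := lintegral_union_le _ _ _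
    _ ≤ ENNReal.ofReal (Real.exp ε) * Gm A + ENNReal.ofReal δ := add_le_add h1 h2
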